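/- Global discrete pseudo-energy identity: let φ^0 be a periodic grid function, set φ^{−1} := φ^0 and ψ^0 := 0, and suppose that for each k = 0, 1, ..., ℓ−1 the pair (φ^{k+1}, ψ^{k+1}) is a periodic solution of the second-order convex splitting scheme with data (φ^{k−1}, φ^k, ψ^k). Then F̃(φ^ℓ, φ^{ℓ−1}, ψ^ℓ) + s·Σ_{k=0}^{ℓ−1} ‖ψ^{k+1/2}‖_{−1}² + (s⁴/2)·Σ_{k=0}^{ℓ−1} ‖∇_h(D_s²φ^k)‖₂² = F(φ^0), where ψ^{k+1/2} = (ψ^{k+1} + ψ^k)/2 and D_s²φ^k = (φ^{k+1} − 2φ^k + φ^{k−1})/s². -/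

import Mathlib

open Finset

noncomputable section

/-- Periodic grid functions on an `m × n` grid (indices taken modulo `m` and `n`). -/
abbrev Grid (m n : ℕ) := ZMod m × ZMod n → ℝ

/-- Forward difference in the `x` direction. -/
def Dx {m n : ℕ} (h : ℝ) (φ : Grid m n) : Grid m n :=
  fun p => (φ (p.1 + 1, p.2) - φ p) / h

/-- Forward difference in the `y` direction. -/
def Dy {m n : ℕ} (h : ℝ) (φ : Grid m n) : Grid m n :=
  fun p => (φ (p.1, p.2 + 1) - φ p) / h

/-- The five-point discrete Laplacian. -/
def lapH {m n : ℕ} (h : ℝ) (φ : Grid m n) : Grid m n :=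
  fun p => (φ (p.1 + 1, p.2) + φ (p.1 - 1, p.2) + φ (p.1, p.2 + 1) + φ (p.1, p.2 - 1)
    - 4 * φ p) / h ^ 2

/-- The discrete chemical potential `μ` of the second-order convex splitting scheme,
built from `φ^{k−1} = φm`, `φ^k = φk` and the unknown `φ^{k+1} = φn`. -/
def chemPot {m n : ℕ} (α h : ℝ) (φm φk φn : Grid m n) : Grid m n :=
  fun p => (φn p ^ 2 + φk p ^ 2) / 2 * ((φn p + φk p) / 2)
    + α * ((φn p + φk p) / 2)
    + lapH h (fun q => 3 * φk q - φm q) p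
    + lapH h (lapH h (fun q => (φn q + φk q) / 2)) p

/-- The second-order convex splitting scheme for the MPFC equation:
`β(ψ^{k+1} − ψ^k) = s Δₕμ − s ψ^{k+1/2}` and `φ^{k+1} − φ^k = s ψ^{k+1/2}`. -/
def Scheme {m n : ℕ} (β α s h : ℝ) (φm φk ψk φn ψn : Grid m n) : Prop :=
  (∀ p, β * (ψn p - ψk p)
      = s * lapH h (chemPot α h φm φk φn) p - s * ((ψn p + ψk p) / 2)) ∧
  (∀ p, φn p - φk p = s * ((ψn p + ψk p) / 2))

/-- Discrete `L²` norm. -/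
def norm2 {m n : ℕ} [NeZero m] [NeZero n] (h : ℝ) (φ : Grid m n) : ℝ :=
  Real.sqrt (h ^ 2 * ∑ p : ZMod m × ZMod n, φ p ^ 2)

/-- Discrete `L²` norm of the gradient. -/
def gradNorm2 {m n : ℕ} [NeZero m] [NeZero n] (h : ℝ) (φ : Grid m n) : ℝ :=
  Real.sqrt (h ^ 2 * ∑ p : ZMod m × ZMod n, (Dx h φ p ^ 2 + Dy h φ p ^ 2))

/-- Discrete `L⁴` norm. -/
def norm4 {m n : ℕ} [NeZero m] [NeZero n] (h : ℝ) (φ : Grid m n) : ℝ :=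
  (h ^ 2 * ∑ p : ZMod m × ZMod n, φ p ^ 4) ^ ((1 : ℝ) / 4)

/-- The discrete MPFC energy
`F(φ) = ¼‖φ‖₄⁴ + (α/2)‖φ‖₂² − ‖∇ₕφ‖₂² + ½‖Δₕφ‖₂²`. -/
def energyF {m n : ℕ} [NeZero m] [NeZero n] (α h : ℝ) (φ : Grid m n) : ℝ :=
  1 / 4 * norm4 h φ ^ 4 + α / 2 * norm2 h φ ^ 2 - gradNorm2 h φ ^ 2
    + 1 / 2 * norm2 h (lapH h φ) ^ 2

/-- `u` is the mean-zero periodic solution of the discrete Poisson problem `−Δₕu = ψ`;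
the "−1" norm of `ψ` is then `‖∇ₕu‖₂`. -/
def IsNegLapSol {m n : ℕ} [NeZero m] [NeZero n] (h : ℝ) (ψ u : Grid m n) : Prop :=
  (∑ p : ZMod m × ZMod n, u p = 0) ∧ ∀ p, -(lapH h u p) = ψ p

/-- The modified discrete pseudo-energy
`F̃(φ, φ̃, ψ) = F(φ) + (β/2)‖ψ‖_{−1}² + ½‖∇ₕ(φ − φ̃)‖₂²`, expressed through the
mean-zero solution `u` of `−Δₕu = ψ`, so that `‖ψ‖_{−1} = ‖∇ₕu‖₂`. -/
def Ftilde {m n : ℕ} [NeZero m] [NeZero n] (β α h : ℝ) (φ φt u : Grid m n) : ℝ :=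
  energyF α h φ + β / 2 * gradNorm2 h u ^ 2
    + 1 / 2 * gradNorm2 h (fun p => φ p - φt p) ^ 2

section MPFCAux

variable {m n : ℕ} [NeZero m] [NeZero n]

/-- Plain discrete inner product (without the `h²` factor). -/
def ipS (φ χ : Grid m n) : ℝ := ∑ p : ZMod m × ZMod n, φ p * χ p

/-- Plain gradient inner product (without the `h²` factor). -/
def gS (h : ℝ) (φ χ : Grid m n) : ℝ :=
  ∑ p : ZMod m × ZMod n, (Dx h φ p * Dx h χ p + Dy h φ p * Dy h χ p)

def p4S (φ : Grid m n) : ℝ := ∑ p : ZMod m × ZMod n, φ p ^ 4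

/-- The energy without the `h²` factor. -/
def eF (α h : ℝ) (φ : Grid m n) : ℝ :=
  1/4 * p4S φ + α/2 * ipS φ φ - gS h φ φ + 1/2 * ipS (lapH h φ) (lapH h φ)

lemma sum_shift (f : Grid m n) (a : ZMod m) (b : ZMod n) :
    ∑ p : ZMod m × ZMod n, f (p.1 + a, p.2 + b) = ∑ p : ZMod m × ZMod n, f p :=
  Fintype.sum_equiv (Equiv.prodCongr (Equiv.addRight a) (Equiv.addRight b)) _ _ fun p => rfl

lemma shift_x (f : Grid m n) :
    ∑ p : ZMod m × ZMod n, f (p.1 + 1, p.2) = ∑ p : ZMod m × ZMod n, f p := by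
  simpa using sum_shift f 1 0

lemma shift_y (f : Grid m n) :
    ∑ p : ZMod m × ZMod n, f (p.1, p.2 + 1) = ∑ p : ZMod m × ZMod n, f p := by
  simpa using sum_shift f 0 1

lemma gS_comm (h : ℝ) (φ χ : Grid m n) : gS h φ χ = gS h χ φ := by
  simp only [gS]; exact Finset.sum_congr rfl fun p _ => by ring

lemma sbp {h : ℝ} (hh : h ≠ 0) (φ χ : Grid m n) : ipS (lapH h φ) χ = -gS h φ χ := by
  have hx1 : ∑ p : ZMod m × ZMod n, φ (p.1 + 1, p.2) * χ (p.1 + 1, p.2)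
      = ∑ p : ZMod m × ZMod n, φ p * χ p := shift_x (fun p => φ p * χ p)
  have hy1 : ∑ p : ZMod m × ZMod n, φ (p.1, p.2 + 1) * χ (p.1, p.2 + 1)
      = ∑ p : ZMod m × ZMod n, φ p * χ p := shift_y (fun p => φ p * χ p)
  have hx2 : ∑ p : ZMod m × ZMod n, φ p * χ (p.1 + 1, p.2)
      = ∑ p : ZMod m × ZMod n, φ (p.1 - 1, p.2) * χ p := by
    have t := shift_x (fun p => φ (p.1 - 1, p.2) * χ p)
    simp only [add_sub_cancel_right] at t
    exact t
  have hy2 : ∑ p : ZMod m × ZMod n, φ p * χ (p.1, p.2 + 1)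
      = ∑ p : ZMod m × ZMod n, φ (p.1, p.2 - 1) * χ p := by
    have t := shift_y (fun p => φ (p.1, p.2 - 1) * χ p)
    simp only [add_sub_cancel_right] at t
    exact t
  have el : ipS (lapH h φ) χ = (1/h^2) * ∑ p : ZMod m × ZMod n,
      ((φ (p.1+1, p.2) + φ (p.1-1, p.2) + φ (p.1, p.2+1) + φ (p.1, p.2-1) - 4 * φ p) * χ p) := by
    simp only [ipS, lapH]
    rw [Finset.mul_sum]
    exact Finset.sum_congr rfl fun p _ => by ring
  have eg : gS h φ χ = (1/h^2) * ∑ p : ZMod m × ZMod n,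
      ((φ (p.1+1,p.2) - φ p) * (χ (p.1+1,p.2) - χ p)
        + (φ (p.1,p.2+1) - φ p) * (χ (p.1,p.2+1) - χ p)) := by
    simp only [gS, Dx, Dy]
    rw [Finset.mul_sum]
    exact Finset.sum_congr rfl fun p _ => by ring
  have key : (∑ p : ZMod m × ZMod n,
        ((φ (p.1+1, p.2) + φ (p.1-1, p.2) + φ (p.1, p.2+1) + φ (p.1, p.2-1) - 4 * φ p) * χ p))
      + (∑ p : ZMod m × ZMod n,
        ((φ (p.1+1,p.2) - φ p) * (χ (p.1+1,p.2) - χ p)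
          + (φ (p.1,p.2+1) - φ p) * (χ (p.1,p.2+1) - χ p))) = 0 := by
    rw [← Finset.sum_add_distrib]
    have hpt : ∑ p : ZMod m × ZMod n,
        ((φ (p.1+1, p.2) + φ (p.1-1, p.2) + φ (p.1, p.2+1) + φ (p.1, p.2-1) - 4 * φ p) * χ p
          + ((φ (p.1+1,p.2) - φ p) * (χ (p.1+1,p.2) - χ p)
            + (φ (p.1,p.2+1) - φ p) * (χ (p.1,p.2+1) - χ p)))
        = ∑ p : ZMod m × ZMod n,
          ((φ (p.1+1,p.2) * χ (p.1+1,p.2) - φ p * χ p)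
            + (φ (p.1,p.2+1) * χ (p.1,p.2+1) - φ p * χ p)
            + (φ (p.1-1,p.2) * χ p - φ p * χ (p.1+1,p.2))
            + (φ (p.1,p.2-1) * χ p - φ p * χ (p.1,p.2+1))) :=
      Finset.sum_congr rfl fun p _ => by ring
    rw [hpt]
    simp only [Finset.sum_add_distrib, Finset.sum_sub_distrib]
    rw [hx1, hy1, hx2, hy2]
    ring
  rw [el, eg]
  linear_combination (1/h^2) * key

lemma selfadj {h : ℝ} (hh : h ≠ 0) (φ χ : Grid m n) :
    ipS (lapH h φ) χ = ipS φ (lapH h χ) := by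
  have h1 := sbp hh φ χ
  have h2 := sbp hh χ φ
  have h3 : ipS (lapH h χ) φ = ipS φ (lapH h χ) := by
    simp only [ipS]; exact Finset.sum_congr rfl fun p _ => by ring
  rw [h1, gS_comm, ← h2, h3]

lemma step_identity (β α s h : ℝ) (hh : h ≠ 0)
    (a b c ψk ψn u u0 u1 : Grid m n)
    (hs1 : ∀ p, β * (ψn p - ψk p)
      = s * lapH h (chemPot α h c b a) p - s * ((ψn p + ψk p) / 2))
    (hs2 : ∀ p, a p - b p = s * ((ψn p + ψk p) / 2))
    (hu : ∀ p, -(lapH h u p) = (ψn p + ψk p) / 2)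
    (hu0 : ∀ p, -(lapH h u0 p) = ψk p)
    (hu1 : ∀ p, -(lapH h u1 p) = ψn p) :
    eF α h a + β / 2 * gS h u1 u1
      + 1/2 * gS h (fun p => a p - b p) (fun p => a p - b p)
      + s * gS h u u
      + 1/2 * gS h (fun p => a p - 2 * b p + c p) (fun p => a p - 2 * b p + c p)
    = eF α h b + β / 2 * gS h u0 u0
      + 1/2 * gS h (fun p => b p - c p) (fun p => b p - c p) := by
  set μ := chemPot α h c b a with hμ
  have H1 : β * ipS (fun p => ψn p - ψk p) u
      = s * ipS (lapH h μ) u - s * ipS (fun p => (ψn p + ψk p) / 2) u := by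
    simp only [ipS, Finset.mul_sum, ← Finset.sum_sub_distrib]
    exact Finset.sum_congr rfl fun p _ => by linear_combination u p * hs1 p
  have lin0 : ∀ p, lapH h (fun q => u0 q - u1 q) p = lapH h u0 p - lapH h u1 p :=
    fun p => by simp only [lapH]; ring
  have H2a : ipS (fun p => ψn p - ψk p) u = -gS h (fun q => u0 q - u1 q) u := by
    rw [← sbp hh]
    simp only [ipS]
    refine Finset.sum_congr rfl fun p _ => ?_
    rw [lin0 p]
    linear_combination u p * hu0 p - u p * hu1 p
  have H2b : gS h (fun q => u0 q - u1 q) u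
      = ipS (fun p => (ψn p + ψk p) / 2) (fun q => u0 q - u1 q) := by
    have t1 := sbp hh u (fun q => u0 q - u1 q)
    have t2 : ipS (lapH h u) (fun q => u0 q - u1 q)
        = -ipS (fun p => (ψn p + ψk p) / 2) (fun q => u0 q - u1 q) := by
      simp only [ipS, ← Finset.sum_neg_distrib]
      exact Finset.sum_congr rfl fun p _ => by
        linear_combination (-(u0 p - u1 p)) * hu p
    rw [gS_comm]
    linarith [t1, t2]
  have lin_avg : ∀ p, lapH h (fun q => (u1 q + u0 q) / 2) p
      = (lapH h u1 p + lapH h u0 p) / 2 := fun p => by simp only [lapH]; ring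
  have H2c : ipS (fun p => (ψn p + ψk p) / 2) (fun q => u0 q - u1 q)
      = gS h (fun q => (u1 q + u0 q) / 2) (fun q => u0 q - u1 q) := by
    have t1 := sbp hh (fun q => (u1 q + u0 q) / 2) (fun q => u0 q - u1 q)
    have t2 : ipS (lapH h (fun q => (u1 q + u0 q) / 2)) (fun q => u0 q - u1 q)
        = -ipS (fun p => (ψn p + ψk p) / 2) (fun q => u0 q - u1 q) := by
      simp only [ipS, ← Finset.sum_neg_distrib]
      refine Finset.sum_congr rfl fun p _ => ?_
      rw [lin_avg p]
      linear_combination (-(u0 p - u1 p)/2) * hu1 p + (-(u0 p - u1 p)/2) * hu0 p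
    linarith [t1, t2]
  have H2d : gS h (fun q => (u1 q + u0 q) / 2) (fun q => u0 q - u1 q)
      = 1/2 * (gS h u0 u0 - gS h u1 u1) := by
    simp only [gS, Dx, Dy]
    rw [← Finset.sum_sub_distrib, Finset.mul_sum]
    exact Finset.sum_congr rfl fun p _ => by ring
  have H2 : ipS (fun p => ψn p - ψk p) u = 1/2 * (gS h u1 u1 - gS h u0 u0) := by
    rw [H2a, H2b, H2c, H2d]; ring
  have H3 : ipS (fun p => (ψn p + ψk p) / 2) u = gS h u u := by
    have t1 := sbp hh u u
    have t2 : ipS (lapH h u) u = -ipS (fun p => (ψn p + ψk p) / 2) u := by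
      simp only [ipS, ← Finset.sum_neg_distrib]
      exact Finset.sum_congr rfl fun p _ => by linear_combination (-(u p)) * hu p
    linarith
  have H4 : s * ipS (lapH h μ) u = -ipS μ (fun p => a p - b p) := by
    rw [selfadj hh]
    simp only [ipS, Finset.mul_sum, ← Finset.sum_neg_distrib]
    refine Finset.sum_congr rfl fun p _ => ?_
    linear_combination (-(μ p) * s) * hu p + μ p * hs2 p
  have H5a : ipS μ (fun p => a p - b p)
      = (∑ p : ZMod m × ZMod n, ((a p ^ 2 + b p ^ 2) / 2 * ((a p + b p) / 2) * (a p - b p)))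
        + (∑ p : ZMod m × ZMod n, (α * ((a p + b p) / 2) * (a p - b p)))
        + ipS (lapH h (fun q => 3 * b q - c q)) (fun p => a p - b p)
        + ipS (lapH h (lapH h (fun q => (a q + b q) / 2))) (fun p => a p - b p) := by
    simp only [ipS, hμ, chemPot, ← Finset.sum_add_distrib]
    exact Finset.sum_congr rfl fun p _ => by ring
  have H5b : (∑ p : ZMod m × ZMod n,
        ((a p ^ 2 + b p ^ 2) / 2 * ((a p + b p) / 2) * (a p - b p)))
      = 1/4 * (p4S a - p4S b) := by
    simp only [p4S]
    rw [← Finset.sum_sub_distrib, Finset.mul_sum]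
    exact Finset.sum_congr rfl fun p _ => by ring
  have H5c : (∑ p : ZMod m × ZMod n, (α * ((a p + b p) / 2) * (a p - b p)))
      = α/2 * (ipS a a - ipS b b) := by
    simp only [ipS]
    rw [← Finset.sum_sub_distrib, Finset.mul_sum]
    exact Finset.sum_congr rfl fun p _ => by ring
  have H5d : ipS (lapH h (lapH h (fun q => (a q + b q) / 2))) (fun p => a p - b p)
      = 1/2 * (ipS (lapH h a) (lapH h a) - ipS (lapH h b) (lapH h b)) := by
    rw [selfadj hh]
    simp only [ipS]
    rw [← Finset.sum_sub_distrib, Finset.mul_sum]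
    refine Finset.sum_congr rfl fun p _ => ?_
    simp only [lapH]; ring
  have E : gS h (fun q => 3 * b q - c q) (fun p => a p - b p)
      = gS h a a - gS h b b
        - 1/2 * (gS h (fun p => a p - b p) (fun p => a p - b p)
            - gS h (fun p => b p - c p) (fun p => b p - c p))
        - 1/2 * gS h (fun p => a p - 2 * b p + c p) (fun p => a p - 2 * b p + c p) := by
    simp only [gS]
    simp only [← Finset.sum_sub_distrib]
    simp only [Finset.mul_sum]
    simp only [← Finset.sum_sub_distrib]
    refine Finset.sum_congr rfl fun p _ => ?_
    simp only [Dx, Dy]; ring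
  have Hq3 := sbp hh (fun q => 3 * b q - c q) (fun p => a p - b p)
  have Hcomb : β * (1/2 * (gS h u1 u1 - gS h u0 u0))
      = -(ipS μ (fun p => a p - b p)) - s * gS h u u := by
    rw [← H2, H1, H3]
    linarith [H4]
  simp only [eF]
  linarith [Hcomb, H5a, H5b, H5c, H5d, E, Hq3]

end MPFCAux
section MPFCAux2

variable {m n : ℕ} [NeZero m] [NeZero n]

def Useq (uhalf : ℕ → Grid m n) : ℕ → Grid m n
  | 0 => fun _ => 0
  | k + 1 => fun p => 2 * uhalf k p - Useq uhalf k p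

lemma gradNorm2_sq (h : ℝ) (f : Grid m n) : gradNorm2 h f ^ 2 = h ^ 2 * gS h f f := by
  have hX : (0:ℝ) ≤ h ^ 2 * ∑ p : ZMod m × ZMod n, (Dx h f p ^ 2 + Dy h f p ^ 2) := by
    positivity
  simp only [gradNorm2, gS]
  rw [Real.sq_sqrt hX]
  congr 1
  exact Finset.sum_congr rfl fun p _ => by ring

lemma norm2_sq (h : ℝ) (f : Grid m n) : norm2 h f ^ 2 = h ^ 2 * ipS f f := by
  have hX : (0:ℝ) ≤ h ^ 2 * ∑ p : ZMod m × ZMod n, f p ^ 2 := by positivity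
  simp only [norm2, ipS]
  rw [Real.sq_sqrt hX]
  congr 1
  exact Finset.sum_congr rfl fun p _ => by ring

lemma norm4_pow (h : ℝ) (f : Grid m n) : norm4 h f ^ 4 = h ^ 2 * p4S f := by
  have hX : (0:ℝ) ≤ h ^ 2 * ∑ p : ZMod m × ZMod n, f p ^ 4 := by positivity
  simp only [norm4, p4S]
  rw [← Real.rpow_natCast ((h ^ 2 * ∑ p : ZMod m × ZMod n, f p ^ 4) ^ ((1:ℝ)/4)) 4,
    ← Real.rpow_mul hX]
  norm_num

lemma energyF_eq (α h : ℝ) (f : Grid m n) : energyF α h f = h ^ 2 * eF α h f := by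
  simp only [energyF, eF]
  rw [norm4_pow, norm2_sq, gradNorm2_sq, norm2_sq]
  ring

lemma gS_scale (h s : ℝ) (f : Grid m n) :
    gS h (fun p => f p / s ^ 2) (fun p => f p / s ^ 2) = 1 / s ^ 4 * gS h f f := by
  simp only [gS, Dx, Dy]
  rw [Finset.mul_sum]
  exact Finset.sum_congr rfl fun p _ => by ring

end MPFCAux2
/-- Global discrete pseudo-energy identity for the second-order convex splitting scheme,
with initializations `φ^{−1} := φ^0` (encoded by truncated subtraction `φ (k-1)`) and
`ψ^0 := 0`:
`F̃(φ^ℓ, φ^{ℓ−1}, ψ^ℓ) + s ∑_{k<ℓ} ‖ψ^{k+1/2}‖₋₁² + (s⁴/2) ∑_{k<ℓ} ‖∇ₕ(Dₛ²φ^k)‖₂²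
  = F(φ^0)`. -/
theorem scheme_global_energy_identity (m n : ℕ) [NeZero m] [NeZero n]
    (β α s h : ℝ) (hβ : 0 < β) (hα : 0 < α) (hs : 0 < s) (hh : 0 < h)
    (ℓ : ℕ) (φ ψ : ℕ → Grid m n)
    (hψ0 : ψ 0 = fun _ => 0)
    (hScheme : ∀ k < ℓ, Scheme β α s h (φ (k - 1)) (φ k) (ψ k) (φ (k + 1)) (ψ (k + 1)))
    (uhalf : ℕ → Grid m n) (uℓ : Grid m n)
    (huhalf : ∀ k < ℓ, IsNegLapSol h (fun p => (ψ (k + 1) p + ψ k p) / 2) (uhalf k))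
    (huℓ : IsNegLapSol h (ψ ℓ) uℓ) :
    Ftilde β α h (φ ℓ) (φ (ℓ - 1)) uℓ
        + s * ∑ k ∈ Finset.range ℓ, gradNorm2 h (uhalf k) ^ 2
        + s ^ 4 / 2 * ∑ k ∈ Finset.range ℓ,
            gradNorm2 h (fun p => (φ (k + 1) p - 2 * φ k p + φ (k - 1) p) / s ^ 2) ^ 2
      = energyF α h (φ 0) := by
  have hh0 : h ≠ 0 := hh.ne'
  have hs0 : s ≠ 0 := hs.ne'
  -- the recursively constructed "-1"-norm potentials
  have hU : ∀ k, k ≤ ℓ → ∀ p, -(lapH h (Useq uhalf k) p) = ψ k p := by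
    intro k
    induction k with
    | zero =>
      intro _ p
      simp [Useq, lapH, hψ0]
    | succ j ih =>
      intro hj p
      have hjℓ : j < ℓ := hj
      have ihp := ih (Nat.le_of_succ_le hj) p
      have hhalf := (huhalf j hjℓ).2 p
      have lin : lapH h (Useq uhalf (j+1)) p
          = 2 * lapH h (uhalf j) p - lapH h (Useq uhalf j) p := by
        show lapH h (fun q => 2 * uhalf j q - Useq uhalf j q) p = _
        simp only [lapH]; ring
      rw [lin]
      linear_combination 2 * hhalf - ihp
  -- telescoped identity
  have main : ∀ j, j ≤ ℓ →
      eF α h (φ j) + β / 2 * gS h (Useq uhalf j) (Useq uhalf j)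
        + 1/2 * gS h (fun p => φ j p - φ (j-1) p) (fun p => φ j p - φ (j-1) p)
        + s * (∑ k ∈ Finset.range j, gS h (uhalf k) (uhalf k))
        + 1/2 * (∑ k ∈ Finset.range j,
            gS h (fun p => φ (k+1) p - 2 * φ k p + φ (k-1) p)
              (fun p => φ (k+1) p - 2 * φ k p + φ (k-1) p))
      = eF α h (φ 0) := by
    intro j
    induction j with
    | zero =>
      intro _
      have g1 : gS h (Useq uhalf 0) (Useq uhalf 0) = 0 := by
        simp [Useq, gS, Dx, Dy]
      have g2 : gS h (fun p => φ 0 p - φ (0-1) p) (fun p => φ 0 p - φ (0-1) p) = 0 := by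
        simp [gS, Dx, Dy]
      simp only [Finset.range_zero, Finset.sum_empty, g1, g2]
      ring
    | succ j ih =>
      intro hj
      have hjℓ : j < ℓ := hj
      have step := step_identity (m := m) (n := n) β α s h hh0
        (φ (j+1)) (φ j) (φ (j-1)) (ψ j) (ψ (j+1)) (uhalf j)
        (Useq uhalf j) (Useq uhalf (j+1))
        (hScheme j hjℓ).1 (hScheme j hjℓ).2 (huhalf j hjℓ).2
        (hU j (Nat.le_of_succ_le hj)) (hU (j+1) hj)
      have ihj := ih (Nat.le_of_succ_le hj)
      rw [Finset.sum_range_succ, Finset.sum_range_succ]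
      simp only [Nat.add_sub_cancel]
      linarith [ihj, step]
  have mℓ := main ℓ le_rfl
  -- `uℓ` and `Useq uhalf ℓ` have the same discrete Dirichlet energy
  have hUℓ := hU ℓ le_rfl
  have hw : ∀ p, lapH h (fun q => uℓ q - Useq uhalf ℓ q) p = 0 := by
    intro p
    have t1 := huℓ.2 p
    have t2 := hUℓ p
    have lin : lapH h (fun q => uℓ q - Useq uhalf ℓ q) p
        = lapH h uℓ p - lapH h (Useq uhalf ℓ) p := by
      simp only [lapH]; ring
    rw [lin]
    linear_combination t2 - t1
  have hgw : gS h (fun q => uℓ q - Useq uhalf ℓ q) (fun q => uℓ q - Useq uhalf ℓ q) = 0 := by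
    have t := sbp hh0 (fun q => uℓ q - Useq uhalf ℓ q) (fun q => uℓ q - Useq uhalf ℓ q)
    have t2 : ipS (lapH h (fun q => uℓ q - Useq uhalf ℓ q))
        (fun q => uℓ q - Useq uhalf ℓ q) = 0 := by
      simp only [ipS]
      exact Finset.sum_eq_zero fun p _ => by rw [hw p]; ring
    linarith
  have hDxy : ∀ p : ZMod m × ZMod n,
      Dx h uℓ p = Dx h (Useq uhalf ℓ) p ∧ Dy h uℓ p = Dy h (Useq uhalf ℓ) p := by
    intro p
    have hnn : ∀ q ∈ (Finset.univ : Finset (ZMod m × ZMod n)),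
        (0:ℝ) ≤ Dx h (fun q => uℓ q - Useq uhalf ℓ q) q
            * Dx h (fun q => uℓ q - Useq uhalf ℓ q) q
          + Dy h (fun q => uℓ q - Useq uhalf ℓ q) q
            * Dy h (fun q => uℓ q - Useq uhalf ℓ q) q :=
      fun q _ => add_nonneg (mul_self_nonneg _) (mul_self_nonneg _)
    have hgw' : ∑ q : ZMod m × ZMod n,
        (Dx h (fun q => uℓ q - Useq uhalf ℓ q) q * Dx h (fun q => uℓ q - Useq uhalf ℓ q) q
          + Dy h (fun q => uℓ q - Useq uhalf ℓ q) q
            * Dy h (fun q => uℓ q - Useq uhalf ℓ q) q) = 0 := by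
      have := hgw; simpa [gS] using this
    have hp := (Finset.sum_eq_zero_iff_of_nonneg hnn).mp hgw' p (Finset.mem_univ p)
    have hx : Dx h (fun q => uℓ q - Useq uhalf ℓ q) p = 0 := by
      nlinarith [mul_self_nonneg (Dx h (fun q => uℓ q - Useq uhalf ℓ q) p),
        mul_self_nonneg (Dy h (fun q => uℓ q - Useq uhalf ℓ q) p)]
    have hy : Dy h (fun q => uℓ q - Useq uhalf ℓ q) p = 0 := by
      nlinarith [mul_self_nonneg (Dx h (fun q => uℓ q - Useq uhalf ℓ q) p),
        mul_self_nonneg (Dy h (fun q => uℓ q - Useq uhalf ℓ q) p)]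
    have hx' : Dx h (fun q => uℓ q - Useq uhalf ℓ q) p
        = Dx h uℓ p - Dx h (Useq uhalf ℓ) p := by simp only [Dx]; ring
    have hy' : Dy h (fun q => uℓ q - Useq uhalf ℓ q) p
        = Dy h uℓ p - Dy h (Useq uhalf ℓ) p := by simp only [Dy]; ring
    constructor <;> [linarith [hx, hx'.symm.trans hx]; linarith [hy, hy'.symm.trans hy]]
  have hgu : gS h uℓ uℓ = gS h (Useq uhalf ℓ) (Useq uhalf ℓ) := by
    simp only [gS]
    exact Finset.sum_congr rfl fun p _ => by rw [(hDxy p).1, (hDxy p).2]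
  -- convert the sums
  have hsum1 : s * ∑ k ∈ Finset.range ℓ, gradNorm2 h (uhalf k) ^ 2
      = h ^ 2 * (s * ∑ k ∈ Finset.range ℓ, gS h (uhalf k) (uhalf k)) := by
    rw [Finset.mul_sum, Finset.mul_sum, Finset.mul_sum]
    exact Finset.sum_congr rfl fun k _ => by rw [gradNorm2_sq]; ring
  have hsum2 : s ^ 4 / 2 * ∑ k ∈ Finset.range ℓ,
        gradNorm2 h (fun p => (φ (k + 1) p - 2 * φ k p + φ (k - 1) p) / s ^ 2) ^ 2
      = h ^ 2 * (1/2 * ∑ k ∈ Finset.range ℓ,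
          gS h (fun p => φ (k+1) p - 2 * φ k p + φ (k-1) p)
            (fun p => φ (k+1) p - 2 * φ k p + φ (k-1) p)) := by
    rw [Finset.mul_sum, Finset.mul_sum, Finset.mul_sum]
    refine Finset.sum_congr rfl fun k _ => ?_
    rw [gradNorm2_sq,
      gS_scale h s (fun p => φ (k + 1) p - 2 * φ k p + φ (k - 1) p)]
    field_simp
  simp only [Ftilde]
  rw [energyF_eq, energyF_eq, gradNorm2_sq, gradNorm2_sq, hgu, hsum1, hsum2]
  linear_combination h ^ 2 * mℓ
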